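/- Fix n, d, and δ > 0. Let Δ be an n×n dissimilarity matrix all of whose entries satisfy Δ(i,j) ≤ δ. If the configuration z₁,…,z_n ∈ ℝ^d is a global minimizer of the equal-weight raw stress criterion σ_n(Δ,Z) = (1/n²) Σ_{i,j=1}^n (‖z_i − z_j‖ − Δ(i,j))², then ‖z_i − z_j‖ ≤ 6δ for all i, j = 1,…,n. -/

import Mathlib

/-- An `n × n` dissimilarity matrix: symmetric, nonnegative, with zero diagonal. -/
def IsDissim {n : ℕ} (Δ : Matrix (Fin n) (Fin n) ℝ) : Prop :=
  (∀ i j, Δ i j = Δ j i) ∧ (∀ i j, 0 ≤ Δ i j) ∧ (∀ i, Δ i i = 0)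

/-- The equal-weight raw stress criterion `σ_n(Δ, Z) = (1/n²) ∑_{i,j} (‖z_i - z_j‖ - Δ(i,j))²`. -/
noncomputable def rawStress {n d : ℕ} (Δ : Matrix (Fin n) (Fin n) ℝ)
    (Z : Fin n → EuclideanSpace ℝ (Fin d)) : ℝ :=
  (1 / (n : ℝ) ^ 2) * ∑ i, ∑ j, (‖Z i - Z j‖ - Δ i j) ^ 2

/-- Per-term perturbation bound: moving one endpoint by `-s•u` changes the squared
residual by at most `s² + 2δs - 2s⟪v,u⟫`. -/
lemma term_bound {d : ℕ} (v u : EuclideanSpace ℝ (Fin d)) (s t δ : ℝ)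
    (hs : 0 ≤ s) (hu : ‖u‖ ≤ 1) (h0 : 0 ≤ t) (h1 : t ≤ δ) :
    (‖v - s • u‖ - t) ^ 2 ≤
      (‖v‖ - t) ^ 2 + (s ^ 2 + 2 * δ * s - 2 * s * (inner ℝ v u : ℝ)) := by
  have hexp : ‖v - s • u‖ ^ 2 = ‖v‖ ^ 2 - 2 * s * (inner ℝ v u : ℝ) + s ^ 2 * ‖u‖ ^ 2 := by
    rw [norm_sub_sq_real, real_inner_smul_right, norm_smul, Real.norm_eq_abs, mul_pow,
      sq_abs]
    ring
  have habs : |‖v - s • u‖ - ‖v‖| ≤ s := by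
    have h := abs_norm_sub_norm_le (v - s • u) v
    have : ‖v - s • u - v‖ = s * ‖u‖ := by
      rw [sub_sub_cancel_left, norm_neg, norm_smul, Real.norm_eq_abs, abs_of_nonneg hs]
    rw [this] at h
    calc |‖v - s • u‖ - ‖v‖| ≤ s * ‖u‖ := h
      _ ≤ s * 1 := by exact mul_le_mul_of_nonneg_left hu hs
      _ = s := mul_one s
  have habs1 : ‖v - s • u‖ - ‖v‖ ≤ s := (abs_le.mp habs).2
  have habs2 : -s ≤ ‖v - s • u‖ - ‖v‖ := (abs_le.mp habs).1
  have hu2 : ‖u‖ ^ 2 ≤ 1 := by nlinarith [norm_nonneg u]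
  nlinarith [mul_nonneg h0 (by linarith : (0:ℝ) ≤ s - (‖v - s • u‖ - ‖v‖)),
    mul_nonneg (by linarith : (0:ℝ) ≤ δ - t) hs, sq_nonneg s, mul_nonneg hs hs]

/-- Key first-order consequence of global minimality: for any point `p` and any
direction `u` with `‖u‖ ≤ 1`, the sum of projections of `Z p - Z k` on `u` is at
most `n·δ`. -/
lemma key_proj_bound {n d : ℕ} (δ : ℝ) (hδ : 0 < δ)
    (Δ : Matrix (Fin n) (Fin n) ℝ) (hΔ : IsDissim Δ) (hbd : ∀ i j, Δ i j ≤ δ)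
    (hn : 0 < n)
    (Z : Fin n → EuclideanSpace ℝ (Fin d))
    (hmin : ∀ Z' : Fin n → EuclideanSpace ℝ (Fin d), rawStress Δ Z ≤ rawStress Δ Z')
    (p : Fin n) (u : EuclideanSpace ℝ (Fin d)) (hu : ‖u‖ ≤ 1) :
    ∑ k, (inner ℝ (Z p - Z k) u : ℝ) ≤ n * δ := by
  set X : ℝ := ∑ k, (inner ℝ (Z p - Z k) u : ℝ) with hX
  have main : ∀ s : ℝ, 0 < s → X ≤ n * (s + 2 * δ) / 2 := by
    intro s hs
    set E : Fin n → ℝ := fun k => s ^ 2 + 2 * δ * s - 2 * s * (inner ℝ (Z p - Z k) u : ℝ)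
      with hE
    set Z' : Fin n → EuclideanSpace ℝ (Fin d) :=
      fun k => if k = p then Z p - s • u else Z k with hZ'
    have hstress := hmin Z'
    have hc : (0:ℝ) < 1 / (n : ℝ) ^ 2 := by positivity
    have hsum : ∑ a, ∑ b, (‖Z a - Z b‖ - Δ a b) ^ 2 ≤
        ∑ a, ∑ b, (‖Z' a - Z' b‖ - Δ a b) ^ 2 := by
      unfold rawStress at hstress
      exact le_of_mul_le_mul_left hstress hc
    have hpt : ∀ a b : Fin n, (‖Z' a - Z' b‖ - Δ a b) ^ 2 ≤
        (‖Z a - Z b‖ - Δ a b) ^ 2 +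
          ((if a = p then E b else 0) + (if b = p then E a else 0)) := by
      have hZ'v : ∀ c : Fin n, Z' c = if c = p then Z p - s • u else Z c := fun c => rfl
      intro a b
      by_cases ha : a = p <;> by_cases hb : b = p
      · rw [hZ'v a, hZ'v b, if_pos ha, if_pos hb, if_pos ha, if_pos hb, ha, hb]
        simp only [hE, sub_self, norm_zero, inner_zero_left, mul_zero, sub_zero]
        nlinarith [mul_pos hδ hs, sq_nonneg s, hΔ.2.1 p p]
      · rw [hZ'v a, hZ'v b, if_pos ha, if_neg hb, if_pos ha, if_neg hb, ha, add_zero]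
        have h1 : Z p - s • u - Z b = (Z p - Z b) - s • u := by abel
        rw [h1]
        simp only [hE]
        exact term_bound (Z p - Z b) u s (Δ p b) δ hs.le hu (hΔ.2.1 p b) (hbd p b)
      · rw [hZ'v a, hZ'v b, if_neg ha, if_pos hb, if_neg ha, if_pos hb, hb, zero_add]
        have h1 : Z a - (Z p - s • u) = -((Z p - Z a) - s • u) := by abel
        have h2 : Z a - Z p = -(Z p - Z a) := by abel
        rw [h1, h2, norm_neg, norm_neg]
        simp only [hE]
        exact term_bound (Z p - Z a) u s (Δ a p) δ hs.le hu (hΔ.2.1 a p) (hbd a p)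
      · rw [hZ'v a, hZ'v b, if_neg ha, if_neg hb, if_neg ha, if_neg hb]
        simp
    have hsum2 : ∑ a, ∑ b, (‖Z' a - Z' b‖ - Δ a b) ^ 2 ≤
        ∑ a, ∑ b, ((‖Z a - Z b‖ - Δ a b) ^ 2 +
          ((if a = p then E b else 0) + (if b = p then E a else 0))) :=
      Finset.sum_le_sum fun a _ => Finset.sum_le_sum fun b _ => hpt a b
    have hsplit : ∑ a, ∑ b, ((‖Z a - Z b‖ - Δ a b) ^ 2 +
          ((if a = p then E b else 0) + (if b = p then E a else 0))) =
        (∑ a, ∑ b, (‖Z a - Z b‖ - Δ a b) ^ 2) + 2 * ∑ k, E k := by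
      simp only [Finset.sum_add_distrib]
      have h1 : ∑ a : Fin n, ∑ b : Fin n, (if a = p then E b else 0) = ∑ k, E k := by
        rw [Finset.sum_comm]
        congr 1
        funext b
        simp [Finset.sum_ite_eq' Finset.univ p (fun _ => E b)]
      have h2 : ∑ a : Fin n, ∑ b : Fin n, (if b = p then E a else 0) = ∑ k, E k := by
        congr 1
        funext a
        simp [Finset.sum_ite_eq' Finset.univ p (fun _ => E a)]
      rw [h1, h2]; ring
    have hE0 : 0 ≤ 2 * ∑ k, E k := by
      have := hsum.trans (hsum2.trans_eq hsplit)
      linarith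
    have hEsum : ∑ k, E k = n * (s ^ 2 + 2 * δ * s) - 2 * s * X := by
      simp only [hE, hX]
      rw [Finset.sum_sub_distrib, Finset.sum_const, Finset.card_univ, Fintype.card_fin,
        nsmul_eq_mul, ← Finset.mul_sum]
    rw [hEsum] at hE0
    have h2X : 2 * X ≤ n * (s + 2 * δ) := by
      have hmul : s * (2 * X) ≤ s * (n * (s + 2 * δ)) := by nlinarith
      exact le_of_mul_le_mul_left hmul hs
    linarith
  refine le_of_forall_pos_le_add fun ε hε => ?_
  have hn' : (0:ℝ) < n := by exact_mod_cast hn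
  have hs : 0 < 2 * ε / n := by positivity
  have := main (2 * ε / n) hs
  calc X ≤ n * (2 * ε / n + 2 * δ) / 2 := this
    _ = n * δ + ε := by field_simp; ring

/-- Lemma 4.2: if `Δ` has entries bounded by `δ`, then any global minimizer of the
equal-weight raw stress criterion has all pairwise distances bounded by `6δ`. -/
theorem minimizer_diameter_bound {n d : ℕ} (δ : ℝ) (hδ : 0 < δ)
    (Δ : Matrix (Fin n) (Fin n) ℝ) (hΔ : IsDissim Δ) (hbd : ∀ i j, Δ i j ≤ δ)
    (Z : Fin n → EuclideanSpace ℝ (Fin d))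
    (hmin : ∀ Z' : Fin n → EuclideanSpace ℝ (Fin d), rawStress Δ Z ≤ rawStress Δ Z') :
    ∀ i j, ‖Z i - Z j‖ ≤ 6 * δ := by
  intro i j
  have hn : 0 < n := i.pos
  set a : EuclideanSpace ℝ (Fin d) := Z i - Z j with hadef
  set u : EuclideanSpace ℝ (Fin d) := ‖a‖⁻¹ • a with hu
  have hunorm : ‖u‖ ≤ 1 := by
    rw [hu, norm_smul, norm_inv, norm_norm]
    rcases eq_or_ne (‖a‖) 0 with h | h
    · simp [h]
    · rw [inv_mul_cancel₀ h]
  have h1 := key_proj_bound δ hδ Δ hΔ hbd hn Z hmin i u hunorm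
  have h2 := key_proj_bound δ hδ Δ hΔ hbd hn Z hmin j (-u) (by rwa [norm_neg])
  have h2' : ∑ k, (inner ℝ (Z k - Z j) u : ℝ) ≤ n * δ := by
    have : ∀ k, (inner ℝ (Z j - Z k) (-u) : ℝ) = (inner ℝ (Z k - Z j) u : ℝ) := by
      intro k
      rw [inner_neg_right, ← inner_neg_left]
      congr 1
      abel
    calc ∑ k, (inner ℝ (Z k - Z j) u : ℝ) = ∑ k, (inner ℝ (Z j - Z k) (-u) : ℝ) := by
          exact Finset.sum_congr rfl fun k _ => (this k).symm
      _ ≤ n * δ := h2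
  have hsum : ∑ k, ((inner ℝ (Z i - Z k) u : ℝ) + (inner ℝ (Z k - Z j) u : ℝ)) =
      n * (inner ℝ a u : ℝ) := by
    have : ∀ k, (inner ℝ (Z i - Z k) u : ℝ) + (inner ℝ (Z k - Z j) u : ℝ) =
        (inner ℝ a u : ℝ) := by
      intro k
      rw [← inner_add_left]
      congr 1
      rw [hadef]; abel
    rw [Finset.sum_congr rfl fun k _ => this k, Finset.sum_const, Finset.card_univ,
      Fintype.card_fin, nsmul_eq_mul]
  have hinner : (inner ℝ a u : ℝ) = ‖a‖ := by
    rw [hu, real_inner_smul_right, real_inner_self_eq_norm_sq]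
    rcases eq_or_ne (‖a‖) 0 with h | h
    · rw [h]; ring
    · field_simp
  have hcomb : (n : ℝ) * ‖a‖ ≤ 2 * (n * δ) := by
    rw [← hinner, ← hsum]
    rw [Finset.sum_add_distrib]
    linarith
  have hn' : (0:ℝ) < n := by exact_mod_cast hn
  have : ‖a‖ ≤ 2 * δ := by
    have := (mul_le_mul_iff_right₀ hn').mp (by linarith : (n:ℝ) * ‖a‖ ≤ (n:ℝ) * (2 * δ))
    linarith
  linarith
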